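/- The general boundary K-matrix of the 6-vertex model solves the reflection equation: for all nonzero complex numbers x and y, R(y/x)·(K(x) ⊗ I₂)·R̄(xy)·(I₂ ⊗ K(y)) = (I₂ ⊗ K(y))·R(1/(xy))·(K(x) ⊗ I₂)·R̄(x/y), where K(z) = [[z^{s₀}ε₊ + z^{−s₁}ε₋, k₊(z^s − z^{−s})/(q − q⁻¹)], [k₋(z^s − z^{−s})/(q − q⁻¹), z^{−s₀}ε₊ + z^{s₁}ε₋]] for arbitrary scalars ε₊, ε₋, k₊, k₋ ∈ ℂ. -/

import Mathlib

open Matrix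
open scoped Kronecker

/-- The R-matrix of the 6-vertex model, acting on `ℂ² ⊗ ℂ²`. -/
noncomputable def Rm (q : ℂ) (s₀ s₁ : ℤ) (z : ℂ) :
    Matrix (Fin 2 × Fin 2) (Fin 2 × Fin 2) ℂ :=
  Matrix.of fun p p' =>
    if p = p' then (if p.1 = p.2 then q - q⁻¹ * z ^ (s₀ + s₁) else 1 - z ^ (s₀ + s₁))
    else if p = (0, 1) ∧ p' = (1, 0) then (q - q⁻¹) * z ^ s₁
    else if p = (1, 0) ∧ p' = (0, 1) then (q - q⁻¹) * z ^ s₀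
    else 0

/-- The second R-matrix of the 6-vertex model. -/
noncomputable def Rbar (q : ℂ) (s₀ s₁ : ℤ) (z : ℂ) :
    Matrix (Fin 2 × Fin 2) (Fin 2 × Fin 2) ℂ :=
  Matrix.of fun p p' =>
    if p = p' then (if p.1 = p.2 then q - q⁻¹ * z ^ (-(s₀ + s₁)) else 1 - z ^ (-(s₀ + s₁)))
    else if p = (0, 1) ∧ p' = (1, 0) then (q - q⁻¹) * z ^ (-s₀)
    else if p = (1, 0) ∧ p' = (0, 1) then (q - q⁻¹) * z ^ (-s₁)
    else 0

/-- The general boundary K-matrix. -/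
noncomputable def Km (q : ℂ) (s₀ s₁ : ℤ) (εp εm kp km : ℂ) (z : ℂ) :
    Matrix (Fin 2) (Fin 2) ℂ :=
  !![z ^ s₀ * εp + z ^ (-s₁) * εm, kp * (z ^ (s₀ + s₁) - z ^ (-(s₀ + s₁))) / (q - q⁻¹);
     km * (z ^ (s₀ + s₁) - z ^ (-(s₀ + s₁))) / (q - q⁻¹), z ^ (-s₀) * εp + z ^ s₁ * εm]

set_option maxHeartbeats 40000000 in
/-- The general boundary K-matrix of the 6-vertex model solves the reflection equation. -/
theorem general_K_solves_reflection_equation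
    (q : ℂ) (hq0 : q ≠ 0) (hq2 : q ^ 2 ≠ 1) (s₀ s₁ : ℤ) (εp εm kp km : ℂ)
    (x y : ℂ) (hx : x ≠ 0) (hy : y ≠ 0) :
    Rm q s₀ s₁ (y / x) * (Km q s₀ s₁ εp εm kp km x ⊗ₖ (1 : Matrix (Fin 2) (Fin 2) ℂ)) *
        Rbar q s₀ s₁ (x * y) * ((1 : Matrix (Fin 2) (Fin 2) ℂ) ⊗ₖ Km q s₀ s₁ εp εm kp km y)
      = ((1 : Matrix (Fin 2) (Fin 2) ℂ) ⊗ₖ Km q s₀ s₁ εp εm kp km y) *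
        Rm q s₀ s₁ (1 / (x * y)) *
        (Km q s₀ s₁ εp εm kp km x ⊗ₖ (1 : Matrix (Fin 2) (Fin 2) ℂ)) *
        Rbar q s₀ s₁ (x / y) := by
  have hq : q - q⁻¹ ≠ 0 := by
    intro h
    apply hq2
    have h2 : q * (q - q⁻¹) = 0 := by rw [h, mul_zero]
    rw [mul_sub, mul_inv_cancel₀ hq0, sub_eq_zero] at h2
    rw [sq, h2]
  have hqq1 : q * q - 1 ≠ 0 := by rw [← sq]; exact sub_ne_zero.mpr hq2
  have ha : x ^ s₀ ≠ 0 := zpow_ne_zero _ hx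
  have hb : x ^ s₁ ≠ 0 := zpow_ne_zero _ hx
  have hc : y ^ s₀ ≠ 0 := zpow_ne_zero _ hy
  have hd : y ^ s₁ ≠ 0 := zpow_ne_zero _ hy
  ext ⟨i, j⟩ ⟨k, l⟩
  fin_cases i <;> fin_cases j <;> fin_cases k <;> fin_cases l <;>
    simp only [Rm, Rbar, Km, Matrix.mul_apply, Fintype.sum_prod_type, Fin.sum_univ_two,
      Matrix.kroneckerMap_apply, Matrix.one_apply, Matrix.of_apply, Prod.mk.injEq,
      Fin.isValue, Matrix.cons_val', Matrix.cons_val_zero, Matrix.cons_val_one,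
      Matrix.head_cons, Matrix.head_fin_const, Matrix.empty_val', Matrix.cons_val_fin_one,
      one_ne_zero, zero_ne_one, and_true, and_false, false_and, true_and, if_true, if_false,
      ite_true, ite_false, mul_zpow, div_zpow, one_div, _root_.inv_zpow,
      _root_.zpow_neg, zpow_add₀ hx, zpow_add₀ hy, mul_one, mul_zero, zero_mul, one_mul,
      add_zero, zero_add, Fin.zero_eta, Fin.mk_one]
  all_goals generalize x ^ s₀ = a at *
  all_goals generalize x ^ s₁ = b at *
  all_goals generalize y ^ s₀ = c at *
  all_goals generalize y ^ s₁ = d at *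
  all_goals first
    | rfl
    | (field_simp; ring1)
    | (ring_nf; field_simp; ring1)
    | ring
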